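/- Let F: 2^{[d]} → ℝ be submodular and s ∈ ℝ^d with coordinates sorted non-increasingly as s_{j₁} ≥ ⋯ ≥ s_{j_d}, S_k = {j₁,…,j_k}. Then the vector k with k_{j_i} = F(S_i) − F(S_{i−1}) is a subgradient of the Lovász extension f_L at s: for all y ∈ ℝ^d, f_L(y) ≥ f_L(s) + ⟨k, y − s⟩. -/
import Mathlib


/-- The set of the top-`m` indices in the order given by the permutation `σ`. -/
def lovaszPrefix {d : ℕ} (σ : Equiv.Perm (Fin d)) (m : ℕ) : Finset (Fin d) :=
  Finset.univ.filter (fun i => (σ.symm i : ℕ) < m)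

/-- The Lovász extension of a set function `F` on `2^[d]`. -/
noncomputable def lovasz {d : ℕ} (F : Finset (Fin d) → ℝ) (s : Fin d → ℝ) : ℝ :=
  let σ := Tuple.sort (fun i => -s i)
  ∑ k : Fin d, s (σ k) *
    (F (lovaszPrefix σ ((k : ℕ) + 1)) - F (lovaszPrefix σ (k : ℕ)))

/-- The greedy vector of marginal gains of `F` along the non-increasing sorted
order of `s`: its coordinate at the `i`-th largest entry of `s` is
`F(S_i) - F(S_{i-1})`. -/
noncomputable def greedyVector {d : ℕ} (F : Finset (Fin d) → ℝ) (s : Fin d → ℝ) :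
    Fin d → ℝ :=
  let σ := Tuple.sort (fun i => -s i)
  fun m => F (lovaszPrefix σ ((σ.symm m : ℕ) + 1)) - F (lovaszPrefix σ (σ.symm m : ℕ))

lemma lovaszPrefix_zero {d : ℕ} (σ : Equiv.Perm (Fin d)) : lovaszPrefix σ 0 = ∅ := by
  simp [lovaszPrefix]

lemma lovaszPrefix_univ {d : ℕ} (σ : Equiv.Perm (Fin d)) : lovaszPrefix σ d = Finset.univ := by
  simp [lovaszPrefix, Fin.isLt]

lemma lovaszPrefix_succ {d : ℕ} (σ : Equiv.Perm (Fin d)) (k : Fin d) :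
    lovaszPrefix σ ((k : ℕ) + 1) = insert (σ k) (lovaszPrefix σ (k : ℕ)) := by
  ext i
  simp only [lovaszPrefix, Finset.mem_filter, Finset.mem_univ, true_and, Finset.mem_insert,
    Nat.lt_succ_iff_lt_or_eq]
  constructor
  · rintro (h | h)
    · exact Or.inr h
    · left
      have : σ.symm i = k := Fin.ext h
      rw [← this, Equiv.apply_symm_apply]
  · rintro (rfl | h)
    · simp
    · exact Or.inl h

lemma notMem_lovaszPrefix {d : ℕ} (σ : Equiv.Perm (Fin d)) (k : Fin d) :
    σ k ∉ lovaszPrefix σ (k : ℕ) := by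
  simp [lovaszPrefix]

/-- Generic telescoping sum over `Fin d`. -/
lemma fin_telescope {d : ℕ} (g : ℕ → ℝ) :
    ∑ k : Fin d, (g ((k : ℕ) + 1) - g (k : ℕ)) = g d - g 0 := by
  rw [Fin.sum_univ_eq_sum_range (fun m => g (m + 1) - g m) d]
  exact Finset.sum_range_sub g d

/-- The greedy vector for an arbitrary permutation order. -/
noncomputable def gv {d : ℕ} (σ : Equiv.Perm (Fin d)) (F : Finset (Fin d) → ℝ) :
    Fin d → ℝ :=
  fun m => F (lovaszPrefix σ ((σ.symm m : ℕ) + 1)) - F (lovaszPrefix σ (σ.symm m : ℕ))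

lemma gv_apply {d : ℕ} (σ : Equiv.Perm (Fin d)) (F : Finset (Fin d) → ℝ) (k : Fin d) :
    gv σ F (σ k) = F (lovaszPrefix σ ((k : ℕ) + 1)) - F (lovaszPrefix σ (k : ℕ)) := by
  simp [gv]

lemma sum_gv_univ {d : ℕ} (σ : Equiv.Perm (Fin d)) (F : Finset (Fin d) → ℝ) (hF0 : F ∅ = 0) :
    ∑ i : Fin d, gv σ F i = F Finset.univ := by
  rw [← Equiv.sum_comp σ (gv σ F)]
  simp only [gv_apply]
  rw [fin_telescope (fun m => F (lovaszPrefix σ m)), lovaszPrefix_univ, lovaszPrefix_zero, hF0,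
    sub_zero]

lemma sum_gv_le {d : ℕ} (σ : Equiv.Perm (Fin d)) (F : Finset (Fin d) → ℝ) (hF0 : F ∅ = 0)
    (hF : ∀ A B : Finset (Fin d), A ⊆ B → ∀ t ∉ B,
      F (insert t A) - F A ≥ F (insert t B) - F B)
    (A : Finset (Fin d)) :
    ∑ i ∈ A, gv σ F i ≤ F A := by
  have h1 : ∑ i ∈ A, gv σ F i = ∑ i : Fin d, if i ∈ A then gv σ F i else 0 := by
    rw [Finset.sum_ite_mem, Finset.univ_inter]
  rw [h1, ← Equiv.sum_comp σ (fun i => if i ∈ A then gv σ F i else 0)]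
  have h2 : ∀ k : Fin d,
      (if σ k ∈ A then gv σ F (σ k) else 0) ≤
        F (A ∩ lovaszPrefix σ ((k : ℕ) + 1)) - F (A ∩ lovaszPrefix σ (k : ℕ)) := by
    intro k
    by_cases hk : σ k ∈ A
    · simp only [hk, if_true, gv_apply]
      have hins : A ∩ lovaszPrefix σ ((k : ℕ) + 1) = insert (σ k) (A ∩ lovaszPrefix σ (k : ℕ)) := by
        rw [lovaszPrefix_succ, Finset.inter_comm, Finset.insert_inter_of_mem hk,
          Finset.inter_comm]
      rw [hins, lovaszPrefix_succ]
      exact hF (A ∩ lovaszPrefix σ (k : ℕ)) (lovaszPrefix σ (k : ℕ)) Finset.inter_subset_right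
        (σ k) (notMem_lovaszPrefix σ k)
    · simp only [hk, if_false]
      have hins : A ∩ lovaszPrefix σ ((k : ℕ) + 1) = A ∩ lovaszPrefix σ (k : ℕ) := by
        rw [lovaszPrefix_succ, Finset.inter_comm, Finset.insert_inter_of_notMem hk,
          Finset.inter_comm]
      rw [hins, sub_self]
  calc ∑ k : Fin d, (if σ k ∈ A then gv σ F (σ k) else 0)
      ≤ ∑ k : Fin d, (F (A ∩ lovaszPrefix σ ((k : ℕ) + 1)) - F (A ∩ lovaszPrefix σ (k : ℕ))) :=
        Finset.sum_le_sum (fun k _ => h2 k)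
    _ = F A := by
        rw [fin_telescope (fun m => F (A ∩ lovaszPrefix σ m)), lovaszPrefix_univ,
          lovaszPrefix_zero, Finset.inter_univ, Finset.inter_empty, hF0, sub_zero]

lemma abel_eq (a w : ℕ → ℝ) (n : ℕ) :
    ∑ k ∈ Finset.range n, a k * (w (k + 1) - w k) =
      a n * w n - a 0 * w 0 + ∑ k ∈ Finset.range n, (a k - a (k + 1)) * w (k + 1) := by
  induction n with
  | zero => simp
  | succ n ih => simp only [Finset.sum_range_succ, ih]; ring

/-- Edmonds-style inequality: any vector `K` dominated by `F` on all sets and tight on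
`univ` satisfies `⟨K, y⟩ ≤ lovasz F y`. -/
lemma inner_le_lovasz {d : ℕ} (F : Finset (Fin d) → ℝ) (hF0 : F ∅ = 0) (K : Fin d → ℝ)
    (hK1 : ∀ A : Finset (Fin d), ∑ i ∈ A, K i ≤ F A)
    (hK2 : ∑ i : Fin d, K i = F Finset.univ) (y : Fin d → ℝ) :
    ∑ i : Fin d, K i * y i ≤ lovasz F y := by
  rcases Nat.eq_zero_or_pos d with hd | hd
  · subst hd; simp [lovasz]
  set τ := Tuple.sort (fun i => -y i) with hτ
  set h : ℕ → ℝ := fun m => ∑ i ∈ lovaszPrefix τ m, K i with hh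
  set g : ℕ → ℝ := fun m => F (lovaszPrefix τ m) with hg
  set w : ℕ → ℝ := fun m => h m - g m with hw
  set a : ℕ → ℝ := fun m => y (τ ⟨min m (d - 1), by omega⟩) with ha
  have hak : ∀ k : Fin d, a (k : ℕ) = y (τ k) := by
    intro k
    have : min (k : ℕ) (d - 1) = (k : ℕ) := min_eq_left (by omega)
    simp only [ha, this, Fin.eta]
  have hamono : ∀ m : ℕ, a (m + 1) ≤ a m := by
    intro m
    have hmono := Tuple.monotone_sort (fun i => -y i)
    have : (fun i => -y i) (τ ⟨min m (d - 1), by omega⟩) ≤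
        (fun i => -y i) (τ ⟨min (m + 1) (d - 1), by omega⟩) := by
      apply hmono
      rw [Fin.mk_le_mk]
      omega
    simpa only [ha, neg_le_neg_iff] using this
  have hinner : ∑ i : Fin d, K i * y i =
      ∑ k : Fin d, a (k : ℕ) * (h ((k : ℕ) + 1) - h (k : ℕ)) := by
    rw [← Equiv.sum_comp τ (fun i => K i * y i)]
    refine Finset.sum_congr rfl fun k _ => ?_
    have : h ((k : ℕ) + 1) - h (k : ℕ) = K (τ k) := by
      simp only [hh, lovaszPrefix_succ, Finset.sum_insert (notMem_lovaszPrefix τ k)]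
      ring
    rw [this, hak, mul_comm]
  have hlov : lovasz F y = ∑ k : Fin d, a (k : ℕ) * (g ((k : ℕ) + 1) - g (k : ℕ)) := by
    simp only [lovasz, ← hτ, hg]
    exact Finset.sum_congr rfl fun k _ => by rw [hak]
  rw [hinner, hlov, ← sub_nonneg, ← Finset.sum_sub_distrib]
  have hdiff : ∀ k : Fin d,
      a (k : ℕ) * (g ((k : ℕ) + 1) - g (k : ℕ)) - a (k : ℕ) * (h ((k : ℕ) + 1) - h (k : ℕ)) =
      -(a (k : ℕ) * (w ((k : ℕ) + 1) - w (k : ℕ))) := by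
    intro k; simp only [hw]; ring
  rw [Finset.sum_congr rfl fun k _ => hdiff k, Finset.sum_neg_distrib, neg_nonneg,
    Fin.sum_univ_eq_sum_range (fun m => a m * (w (m + 1) - w m)) d, abel_eq]
  have hw0 : w 0 = 0 := by simp [hw, hh, hg, lovaszPrefix_zero, hF0]
  have hwd : w d = 0 := by simp [hw, hh, hg, lovaszPrefix_univ, hK2]
  rw [hw0, hwd]
  simp only [mul_zero, sub_zero, zero_add]
  apply Finset.sum_nonpos
  intro k _
  apply mul_nonpos_of_nonneg_of_nonpos
  · linarith [hamono k]
  · simp only [hw, hh, hg, sub_nonpos]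
    exact hK1 _

theorem stmt_16 {d : ℕ} (F : Finset (Fin d) → ℝ) (hF0 : F ∅ = 0)
    (hF : ∀ A B : Finset (Fin d), A ⊆ B → ∀ t ∉ B,
      F (insert t A) - F A ≥ F (insert t B) - F B)
    (s : Fin d → ℝ) :
    ∀ y : Fin d → ℝ,
      lovasz F y ≥ lovasz F s + ∑ i : Fin d, greedyVector F s i * (y i - s i) := by
  intro y
  set σ := Tuple.sort (fun i => -s i) with hσ
  have hgv : greedyVector F s = gv σ F := rfl
  have hs : ∑ i : Fin d, gv σ F i * s i = lovasz F s := by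
    rw [← Equiv.sum_comp σ (fun i => gv σ F i * s i)]
    simp only [lovasz, ← hσ]
    exact Finset.sum_congr rfl fun k _ => by rw [gv_apply, mul_comm]
  have hle := inner_le_lovasz F hF0 (gv σ F) (sum_gv_le σ F hF0 hF) (sum_gv_univ σ F hF0) y
  have hsplit : ∑ i : Fin d, greedyVector F s i * (y i - s i) =
      ∑ i : Fin d, gv σ F i * y i - ∑ i : Fin d, gv σ F i * s i := by
    rw [hgv, ← Finset.sum_sub_distrib]
    exact Finset.sum_congr rfl fun i _ => by ring
  rw [hsplit, hs]
  linarith
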